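/- Let r, s, t ∈ ℝ⁴ be nonzero, set O_{rst} = (M_r·M_s·M_t)/(‖r‖·‖s‖·‖t‖) and N_{rst} = O_{rst} + O_{rst}ᵗ. Then the characteristic polynomial of N_{rst} equals (x² − 4)(x + 2P̄(r,s,t))², where P̄(r,s,t) = P(r,s,t)/(‖r‖·‖s‖·‖t‖); equivalently, the spectrum of N_{rst} is {2, −2, −2P̄(r,s,t)} with −2P̄(r,s,t) of multiplicity two. -/

import Mathlib

set_option maxHeartbeats 2000000

noncomputable section

open Real Polynomial

attribute [local instance] Matrix.frobeniusNormedAddCommGroup Matrix.frobeniusNormedSpace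

/-- The quaternion corresponding to a vector in ℝ⁴. -/
def quat (t : EuclideanSpace ℝ (Fin 4)) : Quaternion ℝ := ⟨t 0, t 1, t 2, t 3⟩

/-- P(r,s,t) = Re(qr·qs·qt). -/
def Pq (r s t : EuclideanSpace ℝ (Fin 4)) : ℝ := (quat r * quat s * quat t).re

/-- The 4×4 matrix M_s. -/
def Mmat (s : EuclideanSpace ℝ (Fin 4)) : Matrix (Fin 4) (Fin 4) ℝ :=
  !![s 0, -s 1, -s 2, -s 3;
     -s 1, -s 0, -s 3, s 2;
     -s 2, s 3, -s 0, -s 1;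
     -s 3, -s 2, s 1, -s 0]

def Km (a0 a1 a2 a3 b0 b1 b2 b3 : ℝ) : Matrix (Fin 4) (Fin 4) ℝ :=
  !![a0*b0 - a1*b1 - a2*b2 - a3*b3, a0*b1 + a1*b0 - a2*b3 + a3*b2, a0*b2 + a1*b3 + a2*b0 - a3*b1, a0*b3 - a1*b2 + a2*b1 + a3*b0;
     a0*b1 + a1*b0 + a2*b3 - a3*b2, -a0*b0 + a1*b1 - a2*b2 - a3*b3, -a0*b3 + a1*b2 + a2*b1 + a3*b0, a0*b2 + a1*b3 - a2*b0 + a3*b1;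
     a0*b2 - a1*b3 + a2*b0 + a3*b1, a0*b3 + a1*b2 + a2*b1 - a3*b0, -a0*b0 - a1*b1 + a2*b2 - a3*b3, -a0*b1 + a1*b0 + a2*b3 + a3*b2;
     a0*b3 + a1*b2 - a2*b1 + a3*b0, -a0*b2 + a1*b3 + a2*b0 + a3*b1, a0*b1 - a1*b0 + a2*b3 + a3*b2, -a0*b0 - a1*b1 - a2*b2 + a3*b3]

lemma det4 {R : Type*} [CommRing R] (Q : Matrix (Fin 4) (Fin 4) R) :
    Q.det = Q 0 0 * Q 1 1 * Q 2 2 * Q 3 3 - Q 0 0 * Q 1 1 * Q 2 3 * Q 3 2 - Q 0 0 * Q 1 2 * Q 2 1 * Q 3 3 + Q 0 0 * Q 1 2 * Q 2 3 * Q 3 1 + Q 0 0 * Q 1 3 * Q 2 1 * Q 3 2 - Q 0 0 * Q 1 3 * Q 2 2 * Q 3 1 - Q 0 1 * Q 1 0 * Q 2 2 * Q 3 3 + Q 0 1 * Q 1 0 * Q 2 3 * Q 3 2 + Q 0 1 * Q 1 2 * Q 2 0 * Q 3 3 - Q 0 1 * Q 1 2 * Q 2 3 * Q 3 0 - Q 0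 1 * Q 1 3 * Q 2 0 * Q 3 2 + Q 0 1 * Q 1 3 * Q 2 2 * Q 3 0 + Q 0 2 * Q 1 0 * Q 2 1 * Q 3 3 - Q 0 2 * Q 1 0 * Q 2 3 * Q 3 1 - Q 0 2 * Q 1 1 * Q 2 0 * Q 3 3 + Q 0 2 * Q 1 1 * Q 2 3 * Q 3 0 + Q 0 2 * Q 1 3 * Q 2 0 * Q 3 1 - Q 0 2 * Q 1 3 * Q 2 1 * Q 3 0 - Q 0 3 * Q 1 0 * Q 2 1 * Q 3 2 + Q 0 3 * Q 1 0 * Q 2 2 * Q 3 1 + Q 0 3 * Q 1 1 * Q 2 0 * Q 3 2 - Q 0 3 * Q 1 1 * Q 2 2 * Q 3 0 - Q 0 3 * Q 1 2 * Q 2 0 * Q 3 1 + Q 0 3 * Q 1 2 * Q 2 1 * Q 3 0 := by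
  simp only [Matrix.det_succ_row_zero, ← Nat.not_even_iff_odd, Matrix.submatrix_apply,
    Fin.succ_zero_eq_one, Matrix.submatrix_submatrix, Matrix.det_unique, Fin.default_eq_zero,
    Function.comp_apply, Fin.succ_one_eq_two, Fin.sum_univ_succ, Fin.val_zero, Fin.zero_succAbove,
    Finset.univ_unique, Fin.val_succ, Fin.val_eq_zero, Fin.succ_succAbove_zero,
    Finset.sum_singleton, Fin.succ_succAbove_one, Even.add_self]
  simp only [show (Fin.succ 2 : Fin 4) = 3 from rfl, show ((3:Fin 4).succAbove 2) = 2 from rfl,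
    show (Fin.succAbove 1 2 : Fin 4) = 3 from rfl, show (Fin.succAbove 2 2 : Fin 4) = 3 from rfl]
  ring

lemma charpoly_fin4 (Q : Matrix (Fin 4) (Fin 4) ℝ) (w x y z : ℝ)
    (h1 : Q 0 0 + Q 1 1 + Q 2 2 + Q 3 3 = w)
    (h2 : (Q 0 0 * Q 1 1 - Q 0 1 * Q 1 0) + (Q 0 0 * Q 2 2 - Q 0 2 * Q 2 0) + (Q 0 0 * Q 3 3 - Q 0 3 * Q 3 0) + (Q 1 1 * Q 2 2 - Q 1 2 * Q 2 1) + (Q 1 1 * Q 3 3 - Q 1 3 * Q 3 1) + (Q 2 2 * Q 3 3 - Q 2 3 * Q 3 2) = x)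
    (h3 : (Q 0 0 * Q 1 1 * Q 2 2 - Q 0 0 * Q 1 2 * Q 2 1 - Q 0 1 * Q 1 0 * Q 2 2 + Q 0 1 * Q 1 2 * Q 2 0 + Q 0 2 * Q 1 0 * Q 2 1 - Q 0 2 * Q 1 1 * Q 2 0) + (Q 0 0 * Q 1 1 * Q 3 3 - Q 0 0 * Q 1 3 * Q 3 1 - Q 0 1 * Q 1 0 * Q 3 3 + Q 0 1 * Q 1 3 * Q 3 0 + Q 0 3 * Q 1 0 * Q 3 1 - Q 0 3 * Q 1 1 * Q 3 0) + (Q 0 0 * Q 2 2 * Q 3 3 - Q 0 0 * Q 2 3 * Q 3 2 - Q 0 2 * Q 2 0 * Q 3 3 + Q 0 2 * Q 2 3 * Q 3 0 + Q 0 3 * Q 2 0 * Q 3 2 - Q 0 3 * Q 2 2 * Q 3 0) + (Q 1 1 * Q 2 2 * Q 3 3 - Q 1 1 * Q 2 3 * Q 3 2 - Q 1 2 * Q 2 1 * Q 3 3 + Q 1 2 * Q 2 3 * Q 3 1 + Q 1 3 * Q 2 1 * Q 3 2 - Q 1 3 * Q 2 2 * Q 3 1) = y)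
    (h4 : Q 0 0 * Q 1 1 * Q 2 2 * Q 3 3 - Q 0 0 * Q 1 1 * Q 2 3 * Q 3 2 - Q 0 0 * Q 1 2 * Q 2 1 * Q 3 3 + Q 0 0 * Q 1 2 * Q 2 3 * Q 3 1 + Q 0 0 * Q 1 3 * Q 2 1 * Q 3 2 - Q 0 0 * Q 1 3 * Q 2 2 * Q 3 1 - Q 0 1 * Q 1 0 * Q 2 2 * Q 3 3 + Q 0 1 * Q 1 0 * Q 2 3 * Q 3 2 + Q 0 1 * Q 1 2 * Q 2 0 * Q 3 3 - Q 0 1 * Q 1 2 * Q 2 3 * Q 3 0 - Q 0 1 * Q 1 3 * Q 2 0 * Q 3 2 + Q 0 1 * Q 1 3 * Q 2 2 * Q 3 0 + Q 0 2 * Q 1 0 * Q 2 1 * Q 3 3 - Q 0 2 * Q 1 0 * Q 2 3 * Q 3 1 - Q 0 2 * Q 1 1 * Q 2 0 * Q 3 3 + Q 0 2 * Q 1 1 * Q 2 3 * Q 3 0 + Q 0 2 * Q 1 3 * Q 2 0 * Q 3 1 - Q 0 2 * Q 1 3 * Q 2 1 * Q 3 0 - Q 0 3 * Q 1 0 * Q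 2 1 * Q 3 2 + Q 0 3 * Q 1 0 * Q 2 2 * Q 3 1 + Q 0 3 * Q 1 1 * Q 2 0 * Q 3 2 - Q 0 3 * Q 1 1 * Q 2 2 * Q 3 0 - Q 0 3 * Q 1 2 * Q 2 0 * Q 3 1 + Q 0 3 * Q 1 2 * Q 2 1 * Q 3 0 = z) :
    Q.charpoly = X ^ 4 - C w * X ^ 3 + C x * X ^ 2 - C y * X + C z := by
  subst h1 h2 h3 h4
  rw [Matrix.charpoly, det4]
  rw [show (Matrix.charmatrix Q) 0 1 = -C (Q 0 1) from Matrix.charmatrix_apply_ne _ _ _ (by decide),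
    show (Matrix.charmatrix Q) 0 2 = -C (Q 0 2) from Matrix.charmatrix_apply_ne _ _ _ (by decide),
    show (Matrix.charmatrix Q) 0 3 = -C (Q 0 3) from Matrix.charmatrix_apply_ne _ _ _ (by decide),
    show (Matrix.charmatrix Q) 1 0 = -C (Q 1 0) from Matrix.charmatrix_apply_ne _ _ _ (by decide),
    show (Matrix.charmatrix Q) 1 2 = -C (Q 1 2) from Matrix.charmatrix_apply_ne _ _ _ (by decide),
    show (Matrix.charmatrix Q) 1 3 = -C (Q 1 3) from Matrix.charmatrix_apply_ne _ _ _ (by decide),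
    show (Matrix.charmatrix Q) 2 0 = -C (Q 2 0) from Matrix.charmatrix_apply_ne _ _ _ (by decide),
    show (Matrix.charmatrix Q) 2 1 = -C (Q 2 1) from Matrix.charmatrix_apply_ne _ _ _ (by decide),
    show (Matrix.charmatrix Q) 2 3 = -C (Q 2 3) from Matrix.charmatrix_apply_ne _ _ _ (by decide),
    show (Matrix.charmatrix Q) 3 0 = -C (Q 3 0) from Matrix.charmatrix_apply_ne _ _ _ (by decide),
    show (Matrix.charmatrix Q) 3 1 = -C (Q 3 1) from Matrix.charmatrix_apply_ne _ _ _ (by decide),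
    show (Matrix.charmatrix Q) 3 2 = -C (Q 3 2) from Matrix.charmatrix_apply_ne _ _ _ (by decide)]
  simp only [Matrix.charmatrix_apply_eq, map_add, map_sub, map_mul, map_neg]
  ring

lemma charK (a0 a1 a2 a3 b0 b1 b2 b3 n : ℝ) (hn : n ≠ 0)
    (hn2 : n ^ 2 = (a0^2 + a1^2 + a2^2 + a3^2) * (b0^2 + b1^2 + b2^2 + b3^2)) :
    ((n⁻¹ • Km a0 a1 a2 a3 b0 b1 b2 b3) +
      (n⁻¹ • Km a0 a1 a2 a3 b0 b1 b2 b3).transpose).charpoly =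
      (X ^ 2 - C 4) * (X + C (2 * ((a0*b0 + a1*b1 + a2*b2 + a3*b3) / n))) ^ 2 := by
  have hinv : n⁻¹ * n = 1 := inv_mul_cancel₀ hn
  have hQ : (n⁻¹ • Km a0 a1 a2 a3 b0 b1 b2 b3) +
      (n⁻¹ • Km a0 a1 a2 a3 b0 b1 b2 b3).transpose =
      !![n⁻¹ * (2*a0*b0 - 2*a1*b1 - 2*a2*b2 - 2*a3*b3), n⁻¹ * (2*a0*b1 + 2*a1*b0), n⁻¹ * (2*a0*b2 + 2*a2*b0), n⁻¹ * (2*a0*b3 + 2*a3*b0);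
       n⁻¹ * (2*a0*b1 + 2*a1*b0), n⁻¹ * (-(2*a0*b0) + 2*a1*b1 - 2*a2*b2 - 2*a3*b3), n⁻¹ * (2*a1*b2 + 2*a2*b1), n⁻¹ * (2*a1*b3 + 2*a3*b1);
       n⁻¹ * (2*a0*b2 + 2*a2*b0), n⁻¹ * (2*a1*b2 + 2*a2*b1), n⁻¹ * (-(2*a0*b0) - 2*a1*b1 + 2*a2*b2 - 2*a3*b3), n⁻¹ * (2*a2*b3 + 2*a3*b2);
       n⁻¹ * (2*a0*b3 + 2*a3*b0), n⁻¹ * (2*a1*b3 + 2*a3*b1), n⁻¹ * (2*a2*b3 + 2*a3*b2), n⁻¹ * (-(2*a0*b0) - 2*a1*b1 - 2*a2*b2 + 2*a3*b3)] := by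
    ext i j
    rw [Matrix.add_apply, Matrix.transpose_apply, Matrix.smul_apply, Matrix.smul_apply,
      smul_eq_mul, smul_eq_mul]
    fin_cases i <;> fin_cases j <;> simp [Km] <;> ring
  rw [hQ, charpoly_fin4 _ (-(2 * (2 * ((a0*b0 + a1*b1 + a2*b2 + a3*b3) / n))))
      ((2 * ((a0*b0 + a1*b1 + a2*b2 + a3*b3) / n))^2 - 4)
      (8 * (2 * ((a0*b0 + a1*b1 + a2*b2 + a3*b3) / n)))
      (-(4 * (2 * ((a0*b0 + a1*b1 + a2*b2 + a3*b3) / n))^2))]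
  · simp only [map_neg, map_mul, map_sub, map_pow, map_ofNat, map_add, map_div₀]
    ring
  · simp only [Matrix.cons_val', Matrix.cons_val_zero, Matrix.cons_val_one,
      Matrix.head_cons, Matrix.empty_val', Matrix.cons_val_fin_one, Matrix.head_fin_const,
      Matrix.cons_val_two, Matrix.cons_val_three, Matrix.tail_cons, Matrix.of_apply]
    ring
  · simp only [Matrix.cons_val', Matrix.cons_val_zero, Matrix.cons_val_one,
      Matrix.head_cons, Matrix.empty_val', Matrix.cons_val_fin_one, Matrix.head_fin_const,
      Matrix.cons_val_two, Matrix.cons_val_three, Matrix.tail_cons, Matrix.of_apply]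
    linear_combination (4*(n⁻¹)^2) * hn2 + (-(4*(n⁻¹*n+1))) * hinv
  · simp only [Matrix.cons_val', Matrix.cons_val_zero, Matrix.cons_val_one,
      Matrix.head_cons, Matrix.empty_val', Matrix.cons_val_fin_one, Matrix.head_fin_const,
      Matrix.cons_val_two, Matrix.cons_val_three, Matrix.tail_cons, Matrix.of_apply]
    linear_combination (-(16*(a0*b0 + a1*b1 + a2*b2 + a3*b3)*(n⁻¹)^3)) * hn2
      + (16*(a0*b0 + a1*b1 + a2*b2 + a3*b3)*n⁻¹*(n⁻¹*n+1)) * hinv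
  · simp only [Matrix.cons_val', Matrix.cons_val_zero, Matrix.cons_val_one,
      Matrix.head_cons, Matrix.empty_val', Matrix.cons_val_fin_one, Matrix.head_fin_const,
      Matrix.cons_val_two, Matrix.cons_val_three, Matrix.tail_cons, Matrix.of_apply]
    linear_combination (16*(a0*b0 + a1*b1 + a2*b2 + a3*b3)^2*(n⁻¹)^4) * hn2
      + (-(16*(a0*b0 + a1*b1 + a2*b2 + a3*b3)^2*(n⁻¹)^2*(n⁻¹*n+1))) * hinv

lemma rootsLemma (c : ℝ) :
    ((X ^ 2 - C 4) * (X + C c) ^ 2 : ℝ[X]).roots = {2, -2, -c, -c} := by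
  have h2 : (X ^ 2 - C 4 : ℝ[X]) = (X - C 2) * (X - C (-2)) := by
    simp only [map_neg, map_ofNat]
    ring
  have h3 : (X + C c : ℝ[X]) = X - C (-c) := by
    rw [map_neg, sub_neg_eq_add]
  rw [h2, h3, Polynomial.roots_mul, Polynomial.roots_mul, Polynomial.roots_pow,
    Polynomial.roots_X_sub_C, Polynomial.roots_X_sub_C, Polynomial.roots_X_sub_C]
  · rfl
  · exact mul_ne_zero ((Polynomial.monic_X_sub_C _).ne_zero) ((Polynomial.monic_X_sub_C _).ne_zero)
  · exact mul_ne_zero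
      (mul_ne_zero ((Polynomial.monic_X_sub_C _).ne_zero) ((Polynomial.monic_X_sub_C _).ne_zero))
      (pow_ne_zero _ ((Polynomial.monic_X_sub_C _).ne_zero))

theorem stmt9 (r s t : EuclideanSpace ℝ (Fin 4)) (hr : r ≠ 0) (hs : s ≠ 0) (ht : t ≠ 0) :
    ((((‖r‖ * ‖s‖ * ‖t‖)⁻¹ • (Mmat r * Mmat s * Mmat t)) +
        ((‖r‖ * ‖s‖ * ‖t‖)⁻¹ • (Mmat r * Mmat s * Mmat t)).transpose).charpoly =
      (X ^ 2 - C 4) * (X + C (2 * (Pq r s t / (‖r‖ * ‖s‖ * ‖t‖)))) ^ 2) ∧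
    ((((‖r‖ * ‖s‖ * ‖t‖)⁻¹ • (Mmat r * Mmat s * Mmat t)) +
        ((‖r‖ * ‖s‖ * ‖t‖)⁻¹ • (Mmat r * Mmat s * Mmat t)).transpose).charpoly.roots =
      {2, -2, -(2 * (Pq r s t / (‖r‖ * ‖s‖ * ‖t‖))),
        -(2 * (Pq r s t / (‖r‖ * ‖s‖ * ‖t‖)))}) := by
  have hnorm : ∀ x : EuclideanSpace ℝ (Fin 4),
      ‖x‖ ^ 2 = x 0 ^ 2 + x 1 ^ 2 + x 2 ^ 2 + x 3 ^ 2 := by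
    intro x
    rw [EuclideanSpace.norm_eq, Real.sq_sqrt (by positivity)]
    simp [Fin.sum_univ_four, sq_abs]
  have hn : ‖r‖ * ‖s‖ * ‖t‖ ≠ 0 := by
    have h1 : ‖r‖ ≠ 0 := norm_ne_zero_iff.mpr hr
    have h2 : ‖s‖ ≠ 0 := norm_ne_zero_iff.mpr hs
    have h3 : ‖t‖ ≠ 0 := norm_ne_zero_iff.mpr ht
    exact mul_ne_zero (mul_ne_zero h1 h2) h3
  have hprod : Mmat r * Mmat s * Mmat t =
      Km (r 0 * t 0 - r 1 * t 1 - r 2 * t 2 - r 3 * t 3)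
         (-(r 0 * t 1) - r 1 * t 0 + r 2 * t 3 - r 3 * t 2)
         (-(r 0 * t 2) - r 1 * t 3 - r 2 * t 0 + r 3 * t 1)
         (-(r 0 * t 3) + r 1 * t 2 - r 2 * t 1 - r 3 * t 0)
         (s 0) (s 1) (s 2) (s 3) := by
    ext i j
    fin_cases i <;> fin_cases j <;>
      (simp [Mmat, Km, Matrix.mul_apply, Fin.sum_univ_four]; ring)
  have hP : Pq r s t =
      (r 0 * t 0 - r 1 * t 1 - r 2 * t 2 - r 3 * t 3) * s 0 +
      (-(r 0 * t 1) - r 1 * t 0 + r 2 * t 3 - r 3 * t 2) * s 1 +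
      (-(r 0 * t 2) - r 1 * t 3 - r 2 * t 0 + r 3 * t 1) * s 2 +
      (-(r 0 * t 3) + r 1 * t 2 - r 2 * t 1 - r 3 * t 0) * s 3 := by
    rw [Pq, Quaternion.re_mul, Quaternion.imI_mul, Quaternion.imJ_mul,
      Quaternion.imK_mul, Quaternion.re_mul]
    simp only [quat]
    ring
  have hn2 : (‖r‖ * ‖s‖ * ‖t‖) ^ 2 =
      ((r 0 * t 0 - r 1 * t 1 - r 2 * t 2 - r 3 * t 3)^2 +
       (-(r 0 * t 1) - r 1 * t 0 + r 2 * t 3 - r 3 * t 2)^2 +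
       (-(r 0 * t 2) - r 1 * t 3 - r 2 * t 0 + r 3 * t 1)^2 +
       (-(r 0 * t 3) + r 1 * t 2 - r 2 * t 1 - r 3 * t 0)^2) *
      ((s 0)^2 + (s 1)^2 + (s 2)^2 + (s 3)^2) := by
    have h1 := hnorm r
    have h2 := hnorm s
    have h3 := hnorm t
    have h4 : (‖r‖ * ‖s‖ * ‖t‖) ^ 2 = ‖r‖ ^ 2 * ‖s‖ ^ 2 * ‖t‖ ^ 2 := by ring
    rw [h4, h1, h2, h3]
    ring
  have key := charK _ _ _ _ _ _ _ _ _ hn hn2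
  rw [← hprod] at key
  rw [show (r 0 * t 0 - r 1 * t 1 - r 2 * t 2 - r 3 * t 3) * s 0 +
      (-(r 0 * t 1) - r 1 * t 0 + r 2 * t 3 - r 3 * t 2) * s 1 +
      (-(r 0 * t 2) - r 1 * t 3 - r 2 * t 0 + r 3 * t 1) * s 2 +
      (-(r 0 * t 3) + r 1 * t 2 - r 2 * t 1 - r 3 * t 0) * s 3 = Pq r s t from by rw [hP]] at key
  exact ⟨key, by rw [key, rootsLemma]⟩
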